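/- Every moving semigroup is Hindman: if (M,·) is a semigroup in which the product of two nonprincipal ultrafilters is nonprincipal, then the collection of IIP subsets of M is partition regular, i.e., if A ⊆ M is IIP and A = Y ∪ Z, then Y or Z is IIP. -/

import Mathlib

open Filter FirstOrder FirstOrder.Language

attribute [local instance] Ultrafilter.mul

/-! ## Combinatorial notions in a semigroup -/

/-- `X` is an IP set: it contains `FP u` (all finite products, in increasing order of indices,
of distinct terms) of some sequence `u`. -/
def IsIP {M : Type*} [Semigroup M] (X : Set M) : Prop :=
  ∃ u : Stream' M, Hindman.FP u ⊆ X

/-- `X` is IIP (infinitely IP): it contains an infinite set of the form `FP u`. -/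
def IsIIP {M : Type*} [Semigroup M] (X : Set M) : Prop :=
  ∃ u : Stream' M, Hindman.FP u ⊆ X ∧ (Hindman.FP u).Infinite

/-- `X` is DIP (distinctly IP): it contains `FP u` for an injective sequence `u`. -/
def IsDIP {M : Type*} [Semigroup M] (X : Set M) : Prop :=
  ∃ u : Stream' M, Function.Injective u ∧ Hindman.FP u ⊆ X

/-- An ultrafilter is nonprincipal if it is not of the form `{A | a ∈ A}` for any `a`. -/
def Ultrafilter.Nonprincipal {M : Type*} (U : Ultrafilter M) : Prop :=
  ∀ a : M, U ≠ pure a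

/-- A semigroup is moving if the product of two nonprincipal ultrafilters
(for the ultrafilter product `A ∈ U * V ↔ {m | {n | m * n ∈ A} ∈ V} ∈ U`) is nonprincipal. -/
def IsMoving (M : Type*) [Semigroup M] : Prop :=
  ∀ U V : Ultrafilter M, U.Nonprincipal → V.Nonprincipal → (U * V).Nonprincipal

/-! ## Types over a semigroup structure -/

/-- Formulas in one free variable, with parameters from `M`. -/
abbrev Form1 (L : Language) (M : Type*) := L.Formula (M ⊕ Fin 1)

/-- Formulas in two free variables (`x` and `y`), with parameters from `M`. -/
abbrev Form2 (L : Language) (M : Type*) := L.Formula (M ⊕ Fin 2)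

/-- Realization of a 1-variable formula with parameters at the point `a`. -/
def Realize1 {L : Language} {M : Type*} (S : L.Structure M) (φ : Form1 L M) (a : M) : Prop :=
  @Formula.Realize L M S _ φ (Sum.elim id fun _ => a)

/-- Realization of a 2-variable formula with parameters at the pair `(a, b)`. -/
def Realize2 {L : Language} {M : Type*} (S : L.Structure M) (φ : Form2 L M) (a b : M) : Prop :=
  @Formula.Realize L M S _ φ (Sum.elim id ![a, b])

/-- A complete 1-type over the structure `S` (with parameters for all elements of `M`):
a complete, finitely satisfiable (in `S`) set of formulas in one free variable. -/
def IsCompleteType1 {L : Language} {M : Type*} (S : L.Structure M)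
    (p : Set (Form1 L M)) : Prop :=
  (∀ φ : Form1 L M, φ ∈ p ↔ φ.not ∉ p) ∧
    ∀ s : Finset (Form1 L M), ↑s ⊆ p → ∃ a : M, ∀ φ ∈ s, Realize1 S φ a

/-- A complete 2-type over the structure `S` (with parameters for all elements of `M`). -/
def IsCompleteType2 {L : Language} {M : Type*} (S : L.Structure M)
    (q : Set (Form2 L M)) : Prop :=
  (∀ φ : Form2 L M, φ ∈ q ↔ φ.not ∉ q) ∧
    ∀ s : Finset (Form2 L M), ↑s ⊆ q → ∃ a b : M, ∀ φ ∈ s, Realize2 S φ a b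

/-- `substX u φ` is `φ(u, y)`: the element `u` is substituted for the variable `x`. -/
def substX {L : Language} {M : Type*} (u : M) (φ : Form2 L M) : Form2 L M :=
  φ.subst (Sum.elim (fun m => Term.var (Sum.inl m))
    ![Term.var (Sum.inl u), Term.var (Sum.inr 1)])

/-- A 2-type `q(x, y)` is independent if for every `φ(x, y) ∈ q` there is `u ∈ M` with
`φ(u, y) ∈ q`. -/
def IsIndependent {L : Language} {M : Type*} (q : Set (Form2 L M)) : Prop :=
  ∀ φ ∈ q, ∃ u : M, substX u φ ∈ q

/-- `toX φ` views the 1-variable formula `φ` as a 2-variable formula `φ(x)`. -/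
def toX {L : Language} {M : Type*} (φ : Form1 L M) : Form2 L M :=
  φ.subst (Sum.elim (fun m => Term.var (Sum.inl m)) fun _ => Term.var (Sum.inr 0))

/-- `toY φ` views the 1-variable formula `φ` as a 2-variable formula `φ(y)`. -/
def toY {L : Language} {M : Type*} (φ : Form1 L M) : Form2 L M :=
  φ.subst (Sum.elim (fun m => Term.var (Sum.inl m)) fun _ => Term.var (Sum.inr 1))

/-- `toXY f φ` is `φ(x · y)`, where `f` is the distinguished binary function symbol. -/
def toXY {L : Language} {M : Type*} (f : L.Functions 2) (φ : Form1 L M) : Form2 L M :=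
  φ.subst (Sum.elim (fun m => Term.var (Sum.inl m))
    fun _ => Term.func f ![Term.var (Sum.inr 0), Term.var (Sum.inr 1)])

/-- A complete 1-type `p` over `S` is idempotent (with respect to the binary function symbol `f`
interpreted as the semigroup operation) if there is an independent complete 2-type `q(x, y)` with
`p(x) ⊆ q`, `p(y) ⊆ q` and `p(x · y) ⊆ q`. -/
def IsIdempotentType {L : Language} {M : Type*} (S : L.Structure M) (f : L.Functions 2)
    (p : Set (Form1 L M)) : Prop :=
  IsCompleteType1 S p ∧
    ∃ q : Set (Form2 L M), IsCompleteType2 S q ∧ IsIndependent q ∧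
      (∀ φ ∈ p, toX φ ∈ q) ∧ (∀ φ ∈ p, toY φ ∈ q) ∧ (∀ φ ∈ p, toXY f φ ∈ q)

/-- A 1-type over `S` is principal if it is realized by an element of `M`. -/
def IsPrincipalType {L : Language} {M : Type*} (S : L.Structure M)
    (p : Set (Form1 L M)) : Prop :=
  ∃ a : M, ∀ φ ∈ p, Realize1 S φ a


/-! ### Auxiliary lemmas -/

attribute [local instance] Ultrafilter.semigroup

section Aux

variable {N : Type*}

lemma Ultrafilter.nonprincipal_iff (U : Ultrafilter N) :
    U.Nonprincipal ↔ ∀ a : N, {a}ᶜ ∈ U := by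
  constructor
  · intro h a
    rcases Ultrafilter.mem_or_compl_mem U {a} with hs | hs
    · exfalso
      apply h a
      have : (U : Filter N) = pure a := U.neBot.eq_pure_iff.mpr hs
      exact Ultrafilter.coe_injective (by simpa using this)
    · exact hs
  · intro h a hUa
    have := h a
    rw [hUa] at this
    simp at this

lemma fp_tail_finite [Semigroup N] {a : Stream' N}
    (h : (Hindman.FP a.tail).Finite) : (Hindman.FP a).Finite := by
  have hsub : Hindman.FP a ⊆
      insert a.head (((a.head * ·) '' Hindman.FP a.tail) ∪ Hindman.FP a.tail) := by
    intro m hm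
    cases hm with
    | head' => exact Set.mem_insert _ _
    | tail' _ _ h' => exact Set.mem_insert_of_mem _ (Or.inr h')
    | cons' _ _ h' => exact Set.mem_insert_of_mem _ (Or.inl ⟨_, h', rfl⟩)
  exact ((h.image _).union h).insert _ |>.subset hsub

lemma fp_drop_infinite [Semigroup N] {a : Stream' N}
    (h : (Hindman.FP a).Infinite) (n : ℕ) : (Hindman.FP (a.drop n)).Infinite := by
  induction n with
  | zero => exact h
  | succ n ih =>
    have : (a.drop n).tail = a.drop (n + 1) := by
      rw [Stream'.tail_eq_drop, Stream'.drop_drop, add_comm]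
    intro hfin
    exact ih (fp_tail_finite (this ▸ hfin))

lemma fp_drop_antitone [Semigroup N] (a : Stream' N) {m n : ℕ} (h : m ≤ n) :
    Hindman.FP (a.drop n) ⊆ Hindman.FP (a.drop m) := by
  have : (a.drop m).drop (n - m) = a.drop n := by
    rw [Stream'.drop_drop, Nat.add_sub_cancel' h]
  rw [← this]
  exact Hindman.FP_drop_subset_FP _ _

/-- In a moving semigroup, every infinite FP-set belongs to some nonprincipal idempotent
ultrafilter. -/
lemma exists_nonprincipal_idempotent [Semigroup N] (hM : IsMoving N) (a : Stream' N)
    (ha : (Hindman.FP a).Infinite) :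
    ∃ U : Ultrafilter N, U.Nonprincipal ∧ U * U = U ∧ Hindman.FP a ∈ U := by
  let S : Set (Ultrafilter N) :=
    (⋂ n, { U : Ultrafilter N | Hindman.FP (a.drop n) ∈ U }) ∩
      ⋂ x : N, { U : Ultrafilter N | ({x}ᶜ : Set N) ∈ U }
  have hS_nonpr : ∀ U ∈ S, U.Nonprincipal := by
    intro U hU
    exact (Ultrafilter.nonprincipal_iff U).mpr fun x => Set.mem_iInter.mp hU.2 x
  -- S is nonempty
  have hSne : S.Nonempty := by
    let f : ℕ → Filter N := fun n => cofinite ⊓ 𝓟 (Hindman.FP (a.drop n))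
    have hfne : ∀ n, (f n).NeBot := by
      intro n
      rw [Filter.inf_principal_neBot_iff]
      intro t ht
      exact ((fp_drop_infinite ha n).diff ht).nonempty.imp fun x hx =>
        ⟨Set.notMem_compl_iff.mp hx.2, hx.1⟩
    have hdir : Directed (· ≥ ·) f := by
      intro m n
      refine ⟨max m n, ?_, ?_⟩ <;>
        exact inf_le_inf le_rfl (Filter.principal_mono.mpr
          (fp_drop_antitone a (by simp)))
    haveI : Nonempty N := ⟨ha.nonempty.some⟩
    haveI : (⨅ n, f n).NeBot := Filter.iInf_neBot_of_directed hdir hfne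
    obtain ⟨U, hU⟩ := Ultrafilter.exists_le (⨅ n, f n)
    have hUn : ∀ n, (U : Filter N) ≤ f n := fun n => hU.trans (iInf_le f n)
    refine ⟨U, Set.mem_inter ?_ ?_⟩
    · exact Set.mem_iInter.mpr fun n =>
        (hUn n).trans inf_le_right (Filter.mem_principal_self _)
    · exact Set.mem_iInter.mpr fun x =>
        (hUn 0).trans inf_le_left ((Set.finite_singleton x).compl_mem_cofinite)
  -- S is a compact subsemigroup
  have hS_closed : IsClosed S :=
    ((isClosed_iInter fun n => ultrafilter_isClosed_basic _).inter
      (isClosed_iInter fun x => ultrafilter_isClosed_basic _))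
  have h := exists_idempotent_in_compact_subsemigroup
    Ultrafilter.continuous_mul_left S hSne hS_closed.isCompact ?_
  · obtain ⟨U, hUS, hidem⟩ := h
    exact ⟨U, hS_nonpr U hUS, hidem, by
      have := Set.mem_iInter.mp hUS.1 0
      exact this⟩
  · intro U hU V hV
    constructor
    · rw [Set.mem_iInter] at *
      intro n
      have hU1 := Set.mem_iInter.mp hU.1
      have hV1 := Set.mem_iInter.mp hV.1
      rw [Set.mem_setOf_eq]
      have : ∀ᶠ m in (U : Filter N), ∀ᶠ m' in (V : Filter N),
          m * m' ∈ Hindman.FP (a.drop n) := by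
        filter_upwards [hU1 n] with m hm
        obtain ⟨n', hn⟩ := Hindman.FP.mul hm
        filter_upwards [hV1 (n' + n)] with m' hm'
        apply hn
        simpa only [Stream'.drop_drop, add_comm] using hm'
      exact this
    · have : (U * V).Nonprincipal := hM U V (hS_nonpr U hU) (hS_nonpr V hV)
      exact Set.mem_iInter.mpr fun x => (Ultrafilter.nonprincipal_iff _).mp this x

/-- Strengthening of `Hindman.exists_FP_of_large`: if the idempotent ultrafilter is
nonprincipal, the FP-set can be taken infinite. -/
lemma exists_infinite_FP_of_large [Semigroup N] (U : Ultrafilter N) (U_idem : U * U = U)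
    (hnp : U.Nonprincipal) (s₀ : Set N) (sU : s₀ ∈ U) :
    ∃ a : Stream' N, Hindman.FP a ⊆ s₀ ∧ (Hindman.FP a).Infinite := by
  have hcompl : ∀ x : N, ({x}ᶜ : Set N) ∈ U := (Ultrafilter.nonprincipal_iff U).mp hnp
  have exists_elem : ∀ {s : Set N} (_ : s ∈ U),
      (s ∩ { m | ∀ᶠ m' in U, m * m' ∈ s }).Nonempty :=
    fun {s} hs => Ultrafilter.nonempty_of_mem (inter_mem hs <| by rwa [← U_idem] at hs)
  let elem : { s // s ∈ U } → N := fun p => (exists_elem p.2).some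
  have elem_mem : ∀ p : { s // s ∈ U }, elem p ∈ p.1 := fun p => (exists_elem p.2).some_mem.1
  have elem_ev : ∀ p : { s // s ∈ U }, { m | elem p * m ∈ p.1 } ∈ U :=
    fun p => (exists_elem p.2).some_mem.2
  let succ : { s // s ∈ U } → { s // s ∈ U } := fun p =>
    ⟨p.1 ∩ { m | elem p * m ∈ p.1 } ∩ {elem p}ᶜ,
      inter_mem (inter_mem p.2 (elem_ev p)) (hcompl _)⟩
  let str : { s // s ∈ U } → Stream' N := fun p n => elem (succ^[n] p)
  have hhead : ∀ p, (str p).head = elem p := fun p => rfl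
  have htail : ∀ p, (str p).tail = str (succ p) := by
    intro p
    funext i
    show elem (succ^[i + 1] p) = elem (succ^[i] (succ p))
    rw [Function.iterate_succ_apply]
  have key : ∀ (b : Stream' N), ∀ m ∈ Hindman.FP b,
      ∀ p : { s // s ∈ U }, b = str p → m ∈ p.1 := by
    intro b m h
    induction h with
    | head' c => rintro p rfl; exact elem_mem p
    | tail' c m' h ih =>
      rintro p rfl
      have : m' ∈ (succ p).1 := ih (succ p) (htail p)
      exact this.1.1
    | cons' c m' h ih =>
      rintro p rfl
      have : m' ∈ (succ p).1 := ih (succ p) (htail p)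
      show elem p * m' ∈ p.1
      exact this.1.2
  refine ⟨str ⟨s₀, sU⟩, fun m hm => key _ m hm ⟨s₀, sU⟩ rfl, ?_⟩
  -- FP (str p₀) is infinite since the sequence is injective
  set p₀ : { s // s ∈ U } := ⟨s₀, sU⟩ with hp₀
  have chain : ∀ (n : ℕ) (p : { s // s ∈ U }), (succ^[n] p).1 ⊆ p.1 := by
    intro n
    induction n with
    | zero => intro p; exact fun _ h => h
    | succ n ih =>
      intro p
      rw [Function.iterate_succ_apply]
      exact (ih (succ p)).trans fun m hm => hm.1.1
  have hne : ∀ m n : ℕ, m < n → str p₀ n ≠ str p₀ m := by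
    intro m n hmn
    have h1 : succ^[n] p₀ = succ^[n - (m + 1)] (succ^[m + 1] p₀) := by
      conv_lhs => rw [← Nat.sub_add_cancel hmn, Function.iterate_add_apply]
    have h2 : str p₀ n ∈ (succ^[m + 1] p₀).1 := by
      rw [show str p₀ n = elem (succ^[n] p₀) from rfl, h1]
      exact chain _ _ (elem_mem _)
    have h3 : (succ^[m + 1] p₀).1 ⊆ ({elem (succ^[m] p₀)}ᶜ : Set N) := by
      rw [Function.iterate_succ_apply']
      exact fun x hx => hx.2
    exact h3 h2
  have hinj : Function.Injective (str p₀) := by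
    intro i j hij
    rcases lt_trichotomy i j with h | h | h
    · exact absurd hij.symm (hne i j h)
    · exact h
    · exact absurd hij (hne j i h)
  have : Set.range (str p₀) ⊆ Hindman.FP (str p₀) := by
    rintro _ ⟨i, rfl⟩
    exact Hindman.FP.singleton (str p₀) i
  exact ((Set.infinite_range_of_injective hinj).mono this)

end Aux

/-- every moving semigroup is Hindman, i.e. its IIP sets are partition
regular. -/
theorem isIIP_partition_regular_of_moving {M : Type*} [Semigroup M] (hM : IsMoving M)
    (A Y Z : Set M) (hA : IsIIP A) (hYZ : A = Y ∪ Z) : IsIIP Y ∨ IsIIP Z := by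
  obtain ⟨u, huA, hufin⟩ := hA
  obtain ⟨U, hnp, hidem, hFP⟩ := exists_nonprincipal_idempotent hM u hufin
  have hAU : A ∈ U := Filter.mem_of_superset hFP huA
  rw [hYZ] at hAU
  rcases (Ultrafilter.union_mem_iff).mp hAU with h | h
  · obtain ⟨a, h1, h2⟩ := exists_infinite_FP_of_large U hidem hnp Y h
    exact Or.inl ⟨a, h1, h2⟩
  · obtain ⟨a, h1, h2⟩ := exists_infinite_FP_of_large U hidem hnp Z h
    exact Or.inr ⟨a, h1, h2⟩
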